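/- If ε<c, the all-defector equilibrium (0,1,0,0) is locally asymptotically stable for the four-strategy replicator dynamics: two Jacobian eigenvalues equal ε−c<0, and on the one-dimensional center manifold (parametrized by x with y=1−x, z=w=0) the dynamics satisfy ẋ = (1−b)x² + O(x³), so that x decreases to 0 for small x>0 since b>1. -/

import Mathlib

noncomputable section

/-- Reduced replicator vector field of the reputation-based voluntary Prisoner's
Dilemma: state `p = (x, y, z)` with `w = 1 - x - y - z` eliminated; payoffs
`Π_C = x+z`, `Π_D = bx`, `Π_CE = (x+z)(1-c)+(y+w)(ε-c)`,
`Π_DE = x(b-c)-zc+(y+w)(ε-c)`; dynamics `ẋ = x(Π_C − Π̄)`, etc. -/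
def repField (b c ε : ℝ) (p : Fin 3 → ℝ) : Fin 3 → ℝ :=
  let x := p 0
  let y := p 1
  let z := p 2
  let w := 1 - x - y - z
  let PC := x + z
  let PD := b * x
  let PCE := (x + z) * (1 - c) + (y + w) * (ε - c)
  let PDE := x * (b - c) - z * c + (y + w) * (ε - c)
  let Pbar := x * PC + y * PD + z * PCE + w * PDE
  ![x * (PC - Pbar), y * (PD - Pbar), z * (PCE - Pbar)]

/-- Jacobian matrix of the reduced replicator field at `p`,
entry `(i, j)` being the partial derivative of the `i`-th component
with respect to the `j`-th variable. -/
def jac (b c ε : ℝ) (p : Fin 3 → ℝ) : Matrix (Fin 3) (Fin 3) ℝ :=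
  fun i j => deriv (fun t : ℝ => repField b c ε (Function.update p j t) i) (p j)

lemma deriv_cubic (a3 a2 a1 a0 t0 : ℝ) :
    deriv (fun t : ℝ => a3*t^3 + a2*t^2 + a1*t + a0) t0
      = 3*a3*t0^2 + 2*a2*t0 + a1 := by
  have h : HasDerivAt (fun t : ℝ => a3*t^3 + a2*t^2 + a1*t + a0)
      ((a3*((3:ℕ)*t0^2) + a2*((2:ℕ)*t0^1)) + a1*1 + 0) t0 :=
    ((((hasDerivAt_pow 3 t0).const_mul a3).add
      ((hasDerivAt_pow 2 t0).const_mul a2)).add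
      ((hasDerivAt_id t0).const_mul a1)).add (hasDerivAt_const t0 a0)
  rw [h.deriv]; push_cast; ring

lemma jac_allD (b c ε : ℝ) :
    jac b c ε ![0, 1, 0] = !![0, 0, 0; ε - c, ε - c, 0; 0, 0, ε - c] := by
  have key : ∀ (i j : Fin 3) (a3 a2 a1 a0 : ℝ),
      ((fun t : ℝ => repField b c ε (Function.update ![0,1,0] j t) i)
        = fun t => a3*t^3 + a2*t^2 + a1*t + a0) →
      jac b c ε ![0,1,0] i j = 3*a3*(![(0:ℝ),1,0] j)^2 + 2*a2*(![(0:ℝ),1,0] j) + a1 := by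
    intro i j a3 a2 a1 a0 h
    simp only [jac, h, deriv_cubic]
  funext i j
  fin_cases i <;> fin_cases j
  · exact (key 0 0 (b-ε-1) (1-b+ε-c) 0 0 (by funext t; simp [repField, Function.update]; ring)).trans (by norm_num)
  · exact (key 0 1 0 0 0 0 (by funext t; simp [repField, Function.update])).trans (by norm_num)
  · exact (key 0 2 0 0 0 0 (by funext t; simp [repField, Function.update])).trans (by norm_num)
  · exact (key 1 0 0 (b-1-ε) (ε-c) 0 (by funext t; simp [repField, Function.update]; ring)).trans (by norm_num)
  · exact (key 1 1 0 (ε-c) (c-ε) 0 (by funext t; simp [repField, Function.update]; ring)).trans (by norm_num; ring)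
  · exact (key 1 2 0 (-1) 0 0 (by funext t; simp [repField, Function.update]; ring)).trans (by norm_num [show (![0,1,0] : Fin 3 → ℝ) 2 = 0 from rfl])
  · exact (key 2 0 0 0 0 0 (by funext t; simp [repField, Function.update])).trans (by norm_num)
  · exact (key 2 1 0 0 0 0 (by funext t; simp [repField, Function.update])).trans (by norm_num)
  · exact (key 2 2 (-1) (1-ε) (ε-c) 0 (by funext t; simp [repField, Function.update]; ring)).trans (by norm_num [show (![0,1,0] : Fin 3 → ℝ) 2 = 0 from rfl])

open Polynomial in
/-- If `ε < c`, the all-defector equilibrium `(0,1,0,0)` is locally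
asymptotically stable: two Jacobian eigenvalues equal `ε − c < 0`
(the characteristic polynomial is `X (X − (ε−c))²`), and on the
one-dimensional center manifold (parametrized by `x`, with `y = 1−x`,
`z = w = 0`) the dynamics satisfy `ẋ = (1−b)x² + (b−1)x³`, which is
negative for small `x > 0` since `b > 1`, so `x` decreases to `0`. -/
theorem allD_stable_when_eps_lt_c (b c ε : ℝ) (hb1 : 1 < b) (hb2 : b ≤ 2)
    (hc0 : 0 < c) (hc1 : c < 1) (he0 : 0 < ε) (he1 : ε < 1) (hec : ε < c) :
    (jac b c ε ![0, 1, 0]).charpoly = X * (X - C (ε - c)) ^ 2 ∧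
    ε - c < 0 ∧
    (∀ x : ℝ, repField b c ε ![x, 1 - x, 0] 0
        = (1 - b) * x ^ 2 + (b - 1) * x ^ 3) ∧
    ∃ δ : ℝ, 0 < δ ∧ ∀ x : ℝ, 0 < x → x < δ →
      repField b c ε ![x, 1 - x, 0] 0 < 0 := by
  have hcm : ∀ x : ℝ, repField b c ε ![x, 1 - x, 0] 0
      = (1 - b) * x ^ 2 + (b - 1) * x ^ 3 := by
    intro x; simp [repField]; ring
  refine ⟨?_, by linarith, hcm, 1, one_pos, ?_⟩
  · rw [jac_allD, Matrix.charpoly, Matrix.det_fin_three]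
    simp [Matrix.charmatrix_apply_eq, Matrix.charmatrix_apply_ne, Matrix.charmatrix]
    ring
  · intro x hx hx1
    rw [hcm x]
    nlinarith [mul_pos (sub_pos.mpr hb1) (mul_pos (mul_pos hx hx) (sub_pos.mpr hx1))]
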